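/- Let ν ∈ ℝ, c > 0, and let h : (0,∞) → ℝ be a twice differentiable function satisfying h''(x) = −h(x) + (ν² − 1/4)·x⁻²·h(x) for all x > 0. Define K(z,w) := h(czw) for z, w > 0. Then for all z, w > 0, ∂/∂z[ (1−z²)·∂K/∂z(z,w) ] − c²z²·K(z,w) + (1/4 − ν²)·z⁻²·K(z,w) = ∂/∂w[ (1−w²)·∂K/∂w(z,w) ] − c²w²·K(z,w) + (1/4 − ν²)·w⁻²·K(z,w). -/

import Mathlib

lemma slepian_aux (ν c : ℝ) (hc : 0 < c) (h : ℝ → ℝ)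
    (hd1 : ∀ x : ℝ, 0 < x → DifferentiableAt ℝ h x)
    (hd2 : ∀ x : ℝ, 0 < x → DifferentiableAt ℝ (deriv h) x)
    (hode : ∀ x : ℝ, 0 < x →
      deriv (deriv h) x = -h x + (ν ^ 2 - 1 / 4) * (x ^ 2)⁻¹ * h x)
    (a z : ℝ) (ha : 0 < a) (hz : 0 < z) :
    deriv (fun t => (1 - t ^ 2) * deriv (fun s => h (c * s * a)) t) z
      = -(2 * z) * (deriv h (c * z * a) * (c * a)) +
        (1 - z ^ 2) *
          ((-h (c * z * a) + (ν ^ 2 - 1 / 4) * ((c * z * a) ^ 2)⁻¹ * h (c * z * a))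
            * (c * a) * (c * a)) := by
  have key : ∀ t : ℝ, 0 < t →
      deriv (fun s => h (c * s * a)) t = deriv h (c * t * a) * (c * a) := by
    intro t ht
    have hlin : HasDerivAt (fun s => c * s * a) (c * a) t := by
      simpa using ((hasDerivAt_id t).const_mul c).mul_const a
    exact ((hd1 _ (by positivity)).hasDerivAt.comp t hlin).deriv
  have hev : (fun t => (1 - t ^ 2) * deriv (fun s => h (c * s * a)) t)
      =ᶠ[nhds z] fun t => (1 - t ^ 2) * (deriv h (c * t * a) * (c * a)) := by
    filter_upwards [isOpen_Ioi.mem_nhds hz] with t ht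
    rw [key t ht]
  have hlinz : HasDerivAt (fun s => c * s * a) (c * a) z := by
    simpa using ((hasDerivAt_id z).const_mul c).mul_const a
  have h1 : HasDerivAt (fun t : ℝ => 1 - t ^ 2) (-(2 * z)) z := by
    simpa using (hasDerivAt_pow 2 z).const_sub 1
  have h2 : HasDerivAt (fun t => deriv h (c * t * a) * (c * a))
      (deriv (deriv h) (c * z * a) * (c * a) * (c * a)) z :=
    (((hd2 _ (by positivity)).hasDerivAt.comp z hlinz)).mul_const (c * a)
  have this : deriv (fun t => (1 - t ^ 2) * (deriv h (c * t * a) * (c * a))) z =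
      -(2 * z) * (deriv h (c * z * a) * (c * a)) +
        (1 - z ^ 2) * (deriv (deriv h) (c * z * a) * (c * a) * (c * a)) := (h1.mul h2).deriv
  rw [hev.deriv_eq, this, hode _ (by positivity)]

/-- Kernel symmetry `D_z K = D_w K` for Slepian's Bessel-type operator: for any twice
differentiable `h` on `(0,∞)` with `h'' = −h + (ν²−1/4)x⁻²h`, the kernel
`K(z,w) = h(czw)` satisfies
`∂_z[(1−z²)∂_z K] − c²z²K + (1/4−ν²)z⁻²K = ∂_w[(1−w²)∂_w K] − c²w²K + (1/4−ν²)w⁻²K`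
for all `z, w > 0`. -/
theorem slepian_bessel_kernel_symmetry (ν c : ℝ) (hc : 0 < c) (h : ℝ → ℝ)
    (hd1 : ∀ x : ℝ, 0 < x → DifferentiableAt ℝ h x)
    (hd2 : ∀ x : ℝ, 0 < x → DifferentiableAt ℝ (deriv h) x)
    (hode : ∀ x : ℝ, 0 < x →
      deriv (deriv h) x = -h x + (ν ^ 2 - 1 / 4) * (x ^ 2)⁻¹ * h x) :
    let K : ℝ → ℝ → ℝ := fun z w => h (c * z * w)
    ∀ z w : ℝ, 0 < z → 0 < w →
      deriv (fun z' => (1 - z' ^ 2) * deriv (fun z'' => K z'' w) z') z -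
          c ^ 2 * z ^ 2 * K z w + (1 / 4 - ν ^ 2) * (z ^ 2)⁻¹ * K z w =
        deriv (fun w' => (1 - w' ^ 2) * deriv (fun w'' => K z w'') w') w -
          c ^ 2 * w ^ 2 * K z w + (1 / 4 - ν ^ 2) * (w ^ 2)⁻¹ * K z w := by
  intro K z w hz hw
  have hzdir := slepian_aux ν c hc h hd1 hd2 hode w z hw hz
  have hwdir := slepian_aux ν c hc h hd1 hd2 hode z w hz hw
  have hcomm : (fun w'' => K z w'') = fun s => h (c * s * z) := by
    funext s; simp only [K]; ring_nf
  have hK : (fun z'' => K z'' w) = fun s => h (c * s * w) := rfl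
  rw [hK] at *
  rw [hcomm, hzdir, hwdir]
  have huzw : c * z * w = c * w * z := by ring
  rw [huzw]
  have hzz : z ≠ 0 := hz.ne'
  have hww : w ≠ 0 := hw.ne'
  have hcc : c ≠ 0 := hc.ne'
  simp only [K]
  field_simp
  ring
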